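/- Let F be a graph with Hamiltonian cycle C such that every edge e of C is contained in at least three triangles of F. Then K₅ can be obtained from F by contracting edges of C. -/

import Mathlib

private lemma modeq_dvd' {n M X Y : ℕ} (hM : n ∣ M) (h : X = Y + M ∨ Y = X + M) :
    X % n = Y % n := by
  obtain ⟨q, rfl⟩ := hM
  rcases h with h | h <;> subst h <;> simp [Nat.add_mul_mod_self_left]

private lemma modsplit' {n x : ℕ} (hn : 0 < n) (hx : x < 2 * n) :
    (x % n = x ∧ x < n) ∨ (x % n = x - n ∧ n ≤ x) := by
  rcases lt_or_ge x n with h | h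
  · exact Or.inl ⟨Nat.mod_eq_of_lt h, h⟩
  · refine Or.inr ⟨?_, h⟩
    rw [Nat.mod_eq_sub_mod h, Nat.mod_eq_of_lt (by omega)]

private lemma shiftpos' {n : ℕ} (hn : 0 < n) (c m : ℕ) (hm : m < n) :
    ∃ k, k < n ∧ (c + k) % n = m % n := by
  have hc : c % n < n := Nat.mod_lt _ hn
  have hcd : c % n + n * (c / n) = c := Nat.mod_add_div _ _
  set E := n * (c / n) with hE
  refine ⟨(m + n - c % n) % n, Nat.mod_lt _ hn, ?_⟩
  rcases modsplit' hn (x := m + n - c % n) (by omega) with ⟨h1, h2⟩ | ⟨h1, h2⟩ <;> rw [h1]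
  · exact modeq_dvd' (M := E + n) (Dvd.dvd.add (Dvd.intro _ rfl) dvd_rfl) (Or.inl (by omega))
  · exact modeq_dvd' (M := E) (Dvd.intro _ rfl) (Or.inl (by omega))

private lemma reflpos' {n : ℕ} (hn : 0 < n) (c m : ℕ) (hm : m < n) :
    ∃ k, k < n ∧ (c + n - k % n) % n = m % n := by
  refine ⟨(c + n - m) % n, Nat.mod_lt _ hn, ?_⟩
  have hk : (c + n - m) % n < n := Nat.mod_lt _ hn
  rw [Nat.mod_eq_of_lt hk]
  have hkd : (c + n - m) % n + n * ((c + n - m) / n) = c + n - m := Nat.mod_add_div _ _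
  set k := (c + n - m) % n with hkdef
  set E := n * ((c + n - m) / n) with hE
  exact modeq_dvd' (M := E) (Dvd.intro _ rfl) (Or.inl (by omega))

/-- step class function -/
private def kcls (c1 c2 c3 c4 p : ℕ) : Fin 5 :=
  if p < c1 then 0 else if p < c2 then 1 else if p < c3 then 2 else if p < c4 then 3 else 4

private lemma kcls_eq0 {c1 c2 c3 c4 p : ℕ} (h : p < c1) : kcls c1 c2 c3 c4 p = 0 := by
  simp [kcls, h]

private lemma kcls_eq1 {c1 c2 c3 c4 p : ℕ} (h1 : c1 ≤ p) (h2 : p < c2) :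
    kcls c1 c2 c3 c4 p = 1 := by
  unfold kcls
  rw [if_neg (by omega), if_pos h2]

private lemma kcls_eq2 {c1 c2 c3 c4 p : ℕ} (hc : c1 ≤ c2) (h1 : c2 ≤ p) (h2 : p < c3) :
    kcls c1 c2 c3 c4 p = 2 := by
  unfold kcls
  rw [if_neg (by omega), if_neg (by omega), if_pos h2]

private lemma kcls_eq3 {c1 c2 c3 c4 p : ℕ} (hc : c1 ≤ c2) (hc' : c2 ≤ c3) (h1 : c3 ≤ p)
    (h2 : p < c4) :
    kcls c1 c2 c3 c4 p = 3 := by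
  unfold kcls
  rw [if_neg (by omega), if_neg (by omega), if_neg (by omega), if_pos h2]

private lemma kcls_eq4 {c1 c2 c3 c4 p : ℕ} (hc : c1 ≤ c2) (hc' : c2 ≤ c3) (hc'' : c3 ≤ c4)
    (h1 : c4 ≤ p) : kcls c1 c2 c3 c4 p = 4 := by
  unfold kcls
  rw [if_neg (by omega), if_neg (by omega), if_neg (by omega), if_neg (by omega)]

private lemma kcls_mono {c1 c2 c3 c4 p q : ℕ} (h12 : c1 ≤ c2) (h23 : c2 ≤ c3)
    (h34 : c3 ≤ c4) (hpq : p ≤ q) : kcls c1 c2 c3 c4 p ≤ kcls c1 c2 c3 c4 q := by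
  unfold kcls
  split_ifs <;> first | decide | (exfalso; omega)

private def sigma5 (i : Fin 5) : Fin 5 := ⟨4 - i.val, by omega⟩

private lemma sigma5_sigma5 : ∀ i, sigma5 (sigma5 i) = i := by decide

private lemma sigma5_anti : ∀ i j : Fin 5, i ≤ j → sigma5 j ≤ sigma5 i := by decide

private lemma sigma5_ne : ∀ i j : Fin 5, i ≠ j → sigma5 i ≠ sigma5 j := by decide

private lemma walk_chain_edges {V : Type*} {G : SimpleGraph V} {u w : V} (p : G.Walk u w) :
    List.Chain' (fun a b => s(a, b) ∈ p.edges) p.support := by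
  induction p with
  | nil => exact List.isChain_singleton _
  | @cons u' x w' h q ih =>
    rw [SimpleGraph.Walk.support_cons, SimpleGraph.Walk.edges_cons]
    rw [List.Chain', List.isChain_cons]
    constructor
    · intro b hb
      rw [q.support_eq_cons] at hb
      simp only [List.head?_cons, Option.mem_def, Option.some.injEq] at hb
      subst hb
      exact List.mem_cons_self
    · exact ih.imp fun a b hab => List.mem_cons_of_mem _ hab

/-- extract a valid witness position from a common neighbour which avoids the four
positions `k-1, k, k+1, k+2`. -/
private lemma posa {V : Type*} (n : ℕ) (hn : 0 < n) (e : ℕ → V)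
    (he1 : ∀ k, e (k + n) = e k) (emod : ∀ k, e k = e (k % n)) (k m : ℕ) (hm : m < n)
    (h0 : e m ≠ e k) (h1 : e m ≠ e (k + 1)) (h2 : e m ≠ e (k + 2))
    (h3 : e m ≠ e (k + n - 1)) :
    ∃ a, 2 ≤ a ∧ a + 3 ≤ n ∧ e (k + 1 + a) = e m := by
  have hK : (k + 1) % n < n := Nat.mod_lt _ hn
  have hKd : (k + 1) % n + n * ((k + 1) / n) = k + 1 := Nat.mod_add_div _ _
  set K := (k + 1) % n with hKdef
  set E := n * ((k + 1) / n) with hE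
  set a := (m + n - K) % n with ha
  have ha_lt : a < n := Nat.mod_lt _ hn
  have had : a + n * ((m + n - K) / n) = m + n - K := Nat.mod_add_div _ _
  set E2 := n * ((m + n - K) / n) with hE2
  have hq2 : (m + n - K) / n < 2 := by
    rw [Nat.div_lt_iff_lt_mul hn]; omega
  have hE2' : E2 = 0 ∨ E2 = n := by
    rcases Nat.le_one_iff_eq_zero_or_eq_one.mp (Nat.le_of_lt_succ hq2) with h | h <;>
      rw [hE2, h] <;> simp
  have key : e (k + 1 + a) = e m := by
    rw [emod (k + 1 + a), emod m]
    congr 1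
    rcases hE2' with h | h
    · exact modeq_dvd' (M := E + n) (Dvd.dvd.add (Dvd.intro _ rfl) dvd_rfl) (Or.inl (by omega))
    · exact modeq_dvd' (M := E) (Dvd.intro _ rfl) (Or.inl (by omega))
  have e0 : a ≠ 0 := by
    intro h
    exact h1 (by rw [← key, h])
  have e1 : a ≠ 1 := by
    intro h
    apply h2
    rw [← key, h]
  have hn2 : 2 ≤ n := by omega
  have eN1 : a ≠ n - 1 := by
    intro h
    apply h0
    rw [← key, h, show k + 1 + (n - 1) = k + n by omega, he1]
  have eN2 : a ≠ n - 2 := by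
    intro h
    apply h3
    rw [← key, h, show k + 1 + (n - 2) = k + n - 1 by omega]
  exact ⟨a, by omega, by omega, key⟩

private lemma dich {V : Type*} [Fintype V] [DecidableEq V] (F : SimpleGraph V)
    [DecidableRel F.Adj] {v : V} (C : F.Walk v v)
    (htri : ∀ u w : V, s(u, w) ∈ C.edges →
      3 ≤ (Finset.univ.filter (fun z => F.Adj u z ∧ F.Adj w z)).card)
    (n : ℕ) (hn : 0 < n) (e : ℕ → V) (he1 : ∀ k, e (k + n) = e k)
    (emod : ∀ k, e k = e (k % n)) (he3 : ∀ x : V, ∃ m, m < n ∧ e m = x)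
    (he4 : ∀ k, s(e k, e (k + 1)) ∈ C.edges) (k : ℕ) :
    (∃ a a', 2 ≤ a ∧ a < a' ∧ a' + 3 ≤ n ∧
      F.Adj (e k) (e (k + 1 + a)) ∧ F.Adj (e (k + 1)) (e (k + 1 + a)) ∧
      F.Adj (e k) (e (k + 1 + a')) ∧ F.Adj (e (k + 1)) (e (k + 1 + a'))) ∨
    (F.Adj (e (k + n - 1)) (e (k + 1)) ∧ ∃ a, 2 ≤ a ∧ a + 3 ≤ n ∧
      F.Adj (e k) (e (k + 1 + a)) ∧ F.Adj (e (k + 1)) (e (k + 1 + a))) := by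
  classical
  set T : Finset V := Finset.univ.filter (fun z => F.Adj (e k) z ∧ F.Adj (e (k + 1)) z) with hT
  have hT3 : 3 ≤ T.card := htri _ _ (he4 k)
  set B : Finset V := {e (k + 2), e (k + n - 1)} with hB
  have hBcard : B.card ≤ 2 := by
    apply le_trans (Finset.card_insert_le _ _)
    simp
  have hTB : T.card - B.card ≤ (T \ B).card := Finset.le_card_sdiff _ _
  -- a generic step producing a valid witness from an element of T \ B
  have step : ∀ z ∈ T \ B, ∃ a, 2 ≤ a ∧ a + 3 ≤ n ∧ e (k + 1 + a) = z ∧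
      F.Adj (e k) (e (k + 1 + a)) ∧ F.Adj (e (k + 1)) (e (k + 1 + a)) := by
    intro z hz
    rw [Finset.mem_sdiff] at hz
    obtain ⟨hzT, hzB⟩ := hz
    rw [hT, Finset.mem_filter] at hzT
    obtain ⟨-, hadj1, hadj2⟩ := hzT
    rw [hB, Finset.mem_insert, Finset.mem_singleton] at hzB
    push_neg at hzB
    obtain ⟨m, hm, hzm⟩ := he3 z
    obtain ⟨a, ha2, han, hea⟩ := posa n hn e he1 emod k m hm
      (by rw [hzm]; exact hadj1.ne')
      (by rw [hzm]; exact hadj2.ne')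
      (by rw [hzm]; exact hzB.1)
      (by rw [hzm]; exact hzB.2)
    rw [hzm] at hea
    exact ⟨a, ha2, han, hea, by rw [hea]; exact hadj1, by rw [hea]; exact hadj2⟩
  by_cases h2 : 2 ≤ (T \ B).card
  · obtain ⟨z, hz, z', hz', hne⟩ := Finset.one_lt_card.mp h2
    obtain ⟨a, ha2, han, hea, hc1, hc2⟩ := step z hz
    obtain ⟨a', ha2', han', hea', hc1', hc2'⟩ := step z' hz'
    have hane : a ≠ a' := by
      intro h
      apply hne
      rw [← hea, ← hea', h]
    rcases lt_or_gt_of_ne hane with h | h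
    · exact Or.inl ⟨a, a', ha2, h, han', hc1, hc2, hc1', hc2'⟩
    · exact Or.inl ⟨a', a, ha2', h, han, hc1', hc2', hc1, hc2⟩
  · have h1' : (T \ B).card ≤ 1 := by omega
    have hmemw : e (k + n - 1) ∈ T := by
      by_contra hno
      have hsub : T \ {e (k + 2)} ⊆ T \ B := by
        intro z hz
        rw [Finset.mem_sdiff, Finset.mem_singleton] at hz
        rw [Finset.mem_sdiff, hB, Finset.mem_insert, Finset.mem_singleton]
        refine ⟨hz.1, ?_⟩
        push_neg
        exact ⟨hz.2, fun h => hno (h ▸ hz.1)⟩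
      have hc : 2 ≤ (T \ {e (k + 2)}).card := by
        have := Finset.le_card_sdiff {e (k + 2)} T
        simp only [Finset.card_singleton] at this
        omega
      exact absurd (Finset.card_le_card hsub) (by omega)
    have hadjw : F.Adj (e (k + 1)) (e (k + n - 1)) := by
      rw [hT, Finset.mem_filter] at hmemw
      exact hmemw.2.2
    have hone : 0 < (T \ B).card := by omega
    obtain ⟨z, hz⟩ := Finset.card_pos.mp hone
    obtain ⟨a, ha2, han, hea, hc1, hc2⟩ := step z hz
    exact Or.inr ⟨hadjw.symm, a, ha2, han, hc1, hc2⟩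


private lemma assemble {V : Type*} [DecidableEq V] (F : SimpleGraph V) (l : List V)
    (hnd : l.Nodup) (h : ℕ → Fin 5) (r : ℕ)
    (A1 : ∀ k, h k = h (k % l.length))
    (A2 : ∀ k, k + 2 ≤ l.length → h (r + k) ≤ h (r + k + 1))
    (A3 : ∀ i : Fin 5, ∃ k, k < l.length ∧ h k = i)
    (A4 : ∀ i j : Fin 5, i ≠ j → ∃ p q : ℕ, ∃ (hp : p < l.length) (hq : q < l.length),
      h p = i ∧ h q = j ∧ F.Adj (l.get ⟨p, hp⟩) (l.get ⟨q, hq⟩)) :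
    ∃ (f : V → Fin 5) (r' : ℕ),
      Function.Surjective f ∧
      List.Chain' (· ≤ ·) ((l.rotate r').map f) ∧
      (∀ i j : Fin 5, i ≠ j → ∃ u w : V, f u = i ∧ f w = j ∧ F.Adj u w) := by
  refine ⟨fun x => h (l.idxOf x), r, ?_, ?_, ?_⟩
  · intro i
    obtain ⟨k, hk, hki⟩ := A3 i
    refine ⟨l.get ⟨k, hk⟩, ?_⟩
    simp only [List.get_idxOf hnd]
    exact hki
  · rw [List.Chain', List.isChain_iff_getElem]
    intro i hi
    simp only [List.length_map, List.length_rotate] at hi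
    simp only [List.get_eq_getElem, List.getElem_map, List.getElem_rotate]
    rw [List.Nodup.idxOf_getElem hnd, List.Nodup.idxOf_getElem hnd]
    rw [← A1, ← A1]
    rw [show i + r = r + i by omega, show i + 1 + r = r + i + 1 by omega]
    exact A2 i (by omega)
  · intro i j hij
    obtain ⟨p, q, hp, hq, hpi, hqj, hadj⟩ := A4 i j hij
    refine ⟨l.get ⟨p, hp⟩, l.get ⟨q, hq⟩, ?_, ?_, hadj⟩
    · simp only [List.get_idxOf hnd]; exact hpi
    · simp only [List.get_idxOf hnd]; exact hqj

/-- The core combinatorial lemma.  Positions are natural numbers interpreted cyclically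
mod `n` via the predicate `P` (which is `n`-periodic and symmetric).  The extremal
triangle sits on the cycle edge `(n-1, n ≡ 0)` with witness at position `g`. -/
private lemma core0 (n : ℕ) (P : ℕ → ℕ → Prop)
    (hsym : ∀ k m, P k m → P m k)
    (hperL : ∀ k m, P (k + n) m ↔ P k m)
    (hcyc : ∀ k, P k (k + 1))
    (g : ℕ) (hg2 : 2 ≤ g) (hgn : 2 * g + 1 ≤ n)
    (hbase1 : P (n - 1) g) (hbase2 : P 0 g)
    (hmin : ∀ k a, 2 ≤ a → a + 3 ≤ n → P k (k + 1 + a) → P (k + 1) (k + 1 + a) →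
      g ≤ a ∧ g + a + 1 ≤ n)
    (hdich : (∃ a a', 2 ≤ a ∧ a < a' ∧ a' + 3 ≤ n ∧
                P 0 (1 + a) ∧ P 1 (1 + a) ∧ P 0 (1 + a') ∧ P 1 (1 + a')) ∨
             (P (n - 1) 1 ∧ ∃ a, 2 ≤ a ∧ a + 3 ≤ n ∧ P 0 (1 + a) ∧ P 1 (1 + a))) :
    ∃ c1 c2 c3 c4 : ℕ, 0 < c1 ∧ c1 < c2 ∧ c2 < c3 ∧ c3 < c4 ∧ c4 < n ∧
      ∀ i j : Fin 5, i ≠ j → ∃ p q : ℕ, p < n ∧ q < n ∧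
        kcls c1 c2 c3 c4 p = i ∧ kcls c1 c2 c3 c4 q = j ∧ P p q := by
  have hP0n1 : P 0 (n - 1) := by
    have h1 : P (n - 1) ((n - 1) + 1) := hcyc (n - 1)
    rw [show (n - 1) + 1 = n by omega] at h1
    have h2 : P (0 + n) (n - 1) := by
      rw [show (0 : ℕ) + n = n by omega]
      exact hsym _ _ h1
    exact (hperL 0 (n - 1)).mp h2
  rcases hdich with ⟨a, a', ha2, haa, ha'n, hPa1, hPa2, hPb1, hPb2⟩ |
      ⟨hbon, a, ha2, han, hPa1, hPa2⟩
  · -- two valid witnesses for the edge (0,1)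
    obtain ⟨hga, hgan⟩ := hmin 0 a (by omega) (by omega) hPa1 hPa2
    obtain ⟨hga', hgan'⟩ := hmin 0 a' (by omega) (by omega) hPb1 hPb2
    refine ⟨1, g, a + 1, a' + 1, by omega, by omega, by omega, by omega, by omega, ?_⟩
    have key : ∀ i j : Fin 5, i < j → ∃ p q : ℕ, p < n ∧ q < n ∧
        kcls 1 g (a + 1) (a' + 1) p = i ∧ kcls 1 g (a + 1) (a' + 1) q = j ∧ P p q := by
      intro i j hij
      fin_cases i <;> fin_cases j <;> first
        | exact absurd hij (by decide)
        | skip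
      · -- (0,1)
        exact ⟨0, 1, by omega, by omega, kcls_eq0 (by omega),
          kcls_eq1 (by omega) (by omega), hcyc 0⟩
      · -- (0,2)
        exact ⟨0, g, by omega, by omega, kcls_eq0 (by omega),
          kcls_eq2 (by omega) (by omega) (by omega), hbase2⟩
      · -- (0,3)
        exact ⟨0, 1 + a, by omega, by omega, kcls_eq0 (by omega),
          kcls_eq3 (by omega) (by omega) (by omega) (by omega), hPa1⟩
      · -- (0,4)
        exact ⟨0, n - 1, by omega, by omega, kcls_eq0 (by omega),
          kcls_eq4 (by omega) (by omega) (by omega) (by omega), hP0n1⟩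
      · -- (1,2)
        refine ⟨g - 1, g, by omega, by omega, kcls_eq1 (by omega) (by omega),
          kcls_eq2 (by omega) (by omega) (by omega), ?_⟩
        have := hcyc (g - 1)
        rwa [show g - 1 + 1 = g by omega] at this
      · -- (1,3)
        exact ⟨1, 1 + a, by omega, by omega, kcls_eq1 (by omega) (by omega),
          kcls_eq3 (by omega) (by omega) (by omega) (by omega), hPa2⟩
      · -- (1,4)
        exact ⟨1, 1 + a', by omega, by omega, kcls_eq1 (by omega) (by omega),
          kcls_eq4 (by omega) (by omega) (by omega) (by omega), hPb2⟩
      · -- (2,3)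
        exact ⟨a, a + 1, by omega, by omega, kcls_eq2 (by omega) (by omega) (by omega),
          kcls_eq3 (by omega) (by omega) (by omega) (by omega), hcyc a⟩
      · -- (2,4)
        exact ⟨g, n - 1, by omega, by omega, kcls_eq2 (by omega) (by omega) (by omega),
          kcls_eq4 (by omega) (by omega) (by omega) (by omega), hsym _ _ hbase1⟩
      · -- (3,4)
        exact ⟨a', a' + 1, by omega, by omega,
          kcls_eq3 (by omega) (by omega) (by omega) (by omega),
          kcls_eq4 (by omega) (by omega) (by omega) (by omega), hcyc a'⟩
    intro i j hij
    rcases hij.lt_or_gt with h | h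
    · exact key i j h
    · obtain ⟨p, q, hp, hq, h1, h2, h3⟩ := key j i h
      exact ⟨q, p, hq, hp, h2, h1, hsym _ _ h3⟩
  · -- single valid witness, with the bonus chord
    obtain ⟨hga, hgan⟩ := hmin 0 a (by omega) (by omega) hPa1 hPa2
    refine ⟨1, g, a + 1, a + 2, by omega, by omega, by omega, by omega, by omega, ?_⟩
    have key : ∀ i j : Fin 5, i < j → ∃ p q : ℕ, p < n ∧ q < n ∧
        kcls 1 g (a + 1) (a + 2) p = i ∧ kcls 1 g (a + 1) (a + 2) q = j ∧ P p q := by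
      intro i j hij
      fin_cases i <;> fin_cases j <;> first
        | exact absurd hij (by decide)
        | skip
      · exact ⟨0, 1, by omega, by omega, kcls_eq0 (by omega),
          kcls_eq1 (by omega) (by omega), hcyc 0⟩
      · exact ⟨0, g, by omega, by omega, kcls_eq0 (by omega),
          kcls_eq2 (by omega) (by omega) (by omega), hbase2⟩
      · exact ⟨0, 1 + a, by omega, by omega, kcls_eq0 (by omega),
          kcls_eq3 (by omega) (by omega) (by omega) (by omega), hPa1⟩
      · exact ⟨0, n - 1, by omega, by omega, kcls_eq0 (by omega),
          kcls_eq4 (by omega) (by omega) (by omega) (by omega), hP0n1⟩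
      · refine ⟨g - 1, g, by omega, by omega, kcls_eq1 (by omega) (by omega),
          kcls_eq2 (by omega) (by omega) (by omega), ?_⟩
        have := hcyc (g - 1)
        rwa [show g - 1 + 1 = g by omega] at this
      · exact ⟨1, 1 + a, by omega, by omega, kcls_eq1 (by omega) (by omega),
          kcls_eq3 (by omega) (by omega) (by omega) (by omega), hPa2⟩
      · exact ⟨1, n - 1, by omega, by omega, kcls_eq1 (by omega) (by omega),
          kcls_eq4 (by omega) (by omega) (by omega) (by omega), hsym _ _ hbon⟩
      · exact ⟨a, a + 1, by omega, by omega, kcls_eq2 (by omega) (by omega) (by omega),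
          kcls_eq3 (by omega) (by omega) (by omega) (by omega), hcyc a⟩
      · exact ⟨g, n - 1, by omega, by omega, kcls_eq2 (by omega) (by omega) (by omega),
          kcls_eq4 (by omega) (by omega) (by omega) (by omega), hsym _ _ hbase1⟩
      · refine ⟨a + 1, a + 2, by omega, by omega,
          kcls_eq3 (by omega) (by omega) (by omega) (by omega),
          kcls_eq4 (by omega) (by omega) (by omega) (by omega), ?_⟩
        have := hcyc (a + 1)
        rwa [show a + 1 + 1 = a + 2 by omega] at this
    intro i j hij
    rcases hij.lt_or_gt with h | h
    · exact key i j h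
    · obtain ⟨p, q, hp, hq, h1, h2, h3⟩ := key j i h
      exact ⟨q, p, hq, hp, h2, h1, hsym _ _ h3⟩

/-- If every edge of a Hamiltonian cycle `C` of `F` lies in at least three triangles of
`F`, then `K₅` can be obtained from `F` by contracting edges of `C`: there is a partition
of `V(F)` into 5 classes (fibers of `f`), each inducing a subpath of `C` (the classes
appear as consecutive blocks along a rotation of the cyclic order of `C`), such that any
two distinct classes are joined by an edge of `F`. -/
theorem cyclic_K5_minor {V : Type*} [Fintype V] [DecidableEq V]
    (F : SimpleGraph V) [DecidableRel F.Adj]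
    {v : V} (C : F.Walk v v) (hC : C.IsHamiltonianCycle)
    (htri : ∀ u w : V, s(u, w) ∈ C.edges →
      3 ≤ (Finset.univ.filter (fun z => F.Adj u z ∧ F.Adj w z)).card) :
    ∃ (f : V → Fin 5) (r : ℕ),
      Function.Surjective f ∧
      List.Chain' (· ≤ ·) ((C.support.tail.rotate r).map f) ∧
      (∀ i j : Fin 5, i ≠ j → ∃ u w : V, f u = i ∧ f w = j ∧ F.Adj u w) := by
  classical
  have hnotnil : ¬ C.Nil := hC.isCycle.not_nil
  have hcount : ∀ x : V, C.support.tail.count x = 1 := by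
    intro x
    have h := hC.isHamiltonian_tail x
    rwa [SimpleGraph.Walk.support_tail_of_not_nil C hnotnil] at h
  set l := C.support.tail with hl
  have hnodup : l.Nodup := List.nodup_iff_count_le_one.mpr fun x => le_of_eq (hcount x)
  have hmem : ∀ x : V, x ∈ l := fun x => by
    have h := hcount x
    exact List.count_pos_iff.mp (by omega)
  set n := l.length with hnl
  have hn : 0 < n := by
    rw [hnl]
    exact List.length_pos_iff.mpr (List.ne_nil_of_mem (hmem v))
  have hml : ∀ k : ℕ, k % n < l.length := fun k => by
    rw [← hnl]; exact Nat.mod_lt _ hn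
  have geq : ∀ (x y : ℕ) (hx : x < l.length) (hy : y < l.length), x = y →
      l[x]'hx = l[y]'hy := by
    intro x y hx hy hxy; subst hxy; rfl
  set e : ℕ → V := fun k => l[k % n]'(hml k) with he
  have egeq : ∀ x y : ℕ, x % n = y % n → e x = e y := fun x y hxy => geq _ _ _ _ hxy
  have eval : ∀ (m : ℕ) (hmn : m < n) (hm : m < l.length), e m = l[m]'hm := by
    intro m hmn hm
    exact geq _ _ _ _ (Nat.mod_eq_of_lt hmn)
  have he1 : ∀ k, e (k + n) = e k := fun k => egeq _ _ (Nat.add_mod_right k n)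
  have emod : ∀ k, e k = e (k % n) :=
    fun k => egeq _ _ (Nat.mod_eq_of_lt (Nat.mod_lt _ hn)).symm
  have he3 : ∀ x : V, ∃ m, m < n ∧ e m = x := by
    intro x
    have hidx : l.idxOf x < l.length := List.idxOf_lt_length_iff.mpr (hmem x)
    have hidx' : l.idxOf x < n := by rw [hnl]; exact hidx
    exact ⟨l.idxOf x, hidx', by
      rw [eval _ hidx' hidx]; exact List.getElem_idxOf hidx⟩
  have hsupp : C.support = v :: l := C.support_eq_cons
  have hlne : l ≠ [] := List.ne_nil_of_length_pos (by omega)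
  have glcongr : ∀ (L1 L2 : List V) (h1 : L1 ≠ []) (h2 : L2 ≠ []), L1 = L2 →
      L1.getLast h1 = L2.getLast h2 := by
    intro L1 L2 h1 h2 h; subst h; rfl
  have hgl : l.getLast hlne = v := by
    have h1 := SimpleGraph.Walk.getLast_support C
    calc l.getLast hlne = (v :: l).getLast (List.cons_ne_nil v l) :=
          (List.getLast_cons hlne).symm
      _ = C.support.getLast (by simp) := glcongr _ _ _ _ hsupp.symm
      _ = v := h1
  have hvlast : e (n - 1) = v := by
    rw [eval (n - 1) (by omega) (by omega)]; rw [List.getLast_eq_getElem] at hgl; exact hgl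
  have hchain := walk_chain_edges C
  rw [hsupp, List.Chain', List.isChain_iff_getElem] at hchain
  have he4 : ∀ k, s(e k, e (k + 1)) ∈ C.edges := by
    intro k
    have hm : k % n < n := Nat.mod_lt _ hn
    rcases lt_or_ge (k % n + 1) n with hlt | hge
    · have step := hchain (k % n + 1) (by simp only [List.length_cons]; omega)
      simp only [List.get_eq_getElem, List.getElem_cons_succ] at step
      have h1 : e k = l[k % n]'(hml k) := rfl
      have h2 : e (k + 1) = l[k % n + 1]'(by omega) := by
        rw [emod (k + 1), eval ((k + 1) % n) (Nat.mod_lt _ hn) (hml _)]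
        exact geq _ _ _ _ (by rw [← Nat.mod_add_mod, Nat.mod_eq_of_lt hlt])
      rw [h1, h2]
      exact step
    · have hmeq : k % n = n - 1 := by omega
      have h0 : (k + 1) % n = 0 := by
        rw [← Nat.mod_add_mod, hmeq, show n - 1 + 1 = n by omega, Nat.mod_self]
      have step := hchain 0 (by simp only [List.length_cons]; omega)
      simp only [List.get_eq_getElem, List.getElem_cons_succ, List.getElem_cons_zero] at step
      have h1 : e k = v := by rw [emod k, hmeq]; exact hvlast
      have h2 : e (k + 1) = l[0]'(by omega) := by
        rw [emod (k + 1), h0]; exact eval 0 hn (by omega)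
      rw [h1, h2]
      exact step
  -- the minimum gap
  set S : Set ℕ := {x | ∃ k a, 2 ≤ a ∧ a + 3 ≤ n ∧ F.Adj (e k) (e (k + 1 + a)) ∧
      F.Adj (e (k + 1)) (e (k + 1 + a)) ∧ x = min a (n - 1 - a)} with hS
  have hSne : S.Nonempty := by
    rcases dich F C htri n hn e he1 emod he3 he4 0 with
      ⟨a, a', h2, hlt, h3, c1, c2, _, _⟩ | ⟨_, a, h2, h3, c1, c2⟩
    · exact ⟨min a (n - 1 - a), 0, a, h2, by omega, c1, c2, rfl⟩
    · exact ⟨min a (n - 1 - a), 0, a, h2, h3, c1, c2, rfl⟩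
  set g := sInf S with hgdef
  have hgS : g ∈ S := Nat.sInf_mem hSne
  obtain ⟨k0, a0, ha02, ha03, hQ1, hQ2, hgeq⟩ := hgS
  have hglb : ∀ x ∈ S, g ≤ x := fun x hx => Nat.sInf_le hx
  have hmin' : ∀ k a, 2 ≤ a → a + 3 ≤ n → F.Adj (e k) (e (k + 1 + a)) →
      F.Adj (e (k + 1)) (e (k + 1 + a)) → g ≤ a ∧ g + a + 1 ≤ n := by
    intro k a h1 h2 h3 h4
    have hm := hglb (min a (n - 1 - a)) ⟨k, a, h1, h2, h3, h4, rfl⟩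
    have hm1 : min a (n - 1 - a) ≤ a := min_le_left _ _
    have hm2 : min a (n - 1 - a) ≤ n - 1 - a := min_le_right _ _
    omega
  have hga0 := hmin' k0 a0 ha02 ha03 hQ1 hQ2
  have hgl1 : g ≤ a0 := by rw [hgeq]; exact min_le_left _ _
  have hgr1 : g ≤ n - 1 - a0 := by rw [hgeq]; exact min_le_right _ _
  have hg2 : 2 ≤ g := by
    have h1 : 2 ≤ min a0 (n - 1 - a0) := le_min (by omega) (by omega)
    omega
  have hg2n : 2 * g + 1 ≤ n := by omega
  have hgn : g < n := by omega
  rcases le_or_gt a0 (n - 1 - a0) with hor | hor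
  · -- forward orientation
    have hgaeq : g = a0 := by rw [hgeq]; exact min_eq_left hor
    set β := k0 + 1 with hβ
    have hsym' : ∀ k m, F.Adj (e (β + k)) (e (β + m)) → F.Adj (e (β + m)) (e (β + k)) :=
      fun k m h => h.symm
    have hperL' : ∀ k m, F.Adj (e (β + (k + n))) (e (β + m)) ↔ F.Adj (e (β + k)) (e (β + m)) := by
      intro k m
      rw [show β + (k + n) = (β + k) + n by omega, he1]
    have hcyc' : ∀ k, F.Adj (e (β + k)) (e (β + (k + 1))) := by
      intro k
      rw [show β + (k + 1) = (β + k) + 1 by omega]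
      exact C.adj_of_mem_edges (he4 (β + k))
    have hbase1' : F.Adj (e (β + (n - 1))) (e (β + g)) := by
      have h1 : e (β + (n - 1)) = e k0 := egeq _ _ (modeq_dvd' (dvd_refl n) (Or.inl (by omega)))
      have h2 : e (β + g) = e (k0 + 1 + a0) := by rw [show β + g = k0 + 1 + a0 by omega]
      rw [h1, h2]
      exact hQ1
    have hbase2' : F.Adj (e (β + 0)) (e (β + g)) := by
      rw [show β + 0 = k0 + 1 by omega, show β + g = k0 + 1 + a0 by omega]
      exact hQ2
    have hmin'' : ∀ k a, 2 ≤ a → a + 3 ≤ n → F.Adj (e (β + k)) (e (β + (k + 1 + a))) →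
        F.Adj (e (β + (k + 1))) (e (β + (k + 1 + a))) → g ≤ a ∧ g + a + 1 ≤ n := by
      intro k a h1 h2 h3 h4
      rw [show β + (k + 1 + a) = (β + k) + 1 + a by omega] at h3 h4
      rw [show β + (k + 1) = (β + k) + 1 by omega] at h4
      exact hmin' (β + k) a h1 h2 h3 h4
    have he1f : ∀ k, e (β + (k + n)) = e (β + k) := fun k => by
      rw [show β + (k + n) = (β + k) + n by omega]; exact he1 _
    have emodf : ∀ k, e (β + k) = e (β + k % n) := by
      intro k
      apply egeq
      have hkd : k % n + n * (k / n) = k := Nat.mod_add_div _ _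
      exact modeq_dvd' (M := n * (k / n)) (Dvd.intro _ rfl) (Or.inl (by omega))
    have he3f : ∀ x : V, ∃ m, m < n ∧ e (β + m) = x := by
      intro x
      obtain ⟨m, hm, hem⟩ := he3 x
      obtain ⟨k, hk, hmod⟩ := shiftpos' hn β m hm
      exact ⟨k, hk, (egeq _ _ hmod).trans hem⟩
    have he4f : ∀ k, s(e (β + k), e (β + (k + 1))) ∈ C.edges := by
      intro k
      rw [show β + (k + 1) = (β + k) + 1 by omega]
      exact he4 (β + k)
    have hdich' := dich F C htri n hn (fun k => e (β + k)) he1f emodf he3f he4f 0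
    simp only [Nat.zero_add] at hdich'
    obtain ⟨c1, c2, c3, c4, hcc1, hcc12, hcc23, hcc34, hcc4n, hpairs⟩ :=
      core0 n (fun x y => F.Adj (e (β + x)) (e (β + y))) hsym' hperL' hcyc' g hg2 hg2n
        hbase1' hbase2' hmin'' hdich'
    set r := β % n with hr
    have hrn : r < n := Nat.mod_lt _ hn
    have hβd : r + n * (β / n) = β := Nat.mod_add_div β n
    set Eb := n * (β / n) with hEb
    set h5 : ℕ → Fin 5 := fun k => kcls c1 c2 c3 c4 ((k % n + (n - r)) % n) with hh5
    have A1 : ∀ k, h5 k = h5 (k % n) := by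
      intro k
      have h1 : k % n % n = k % n := Nat.mod_eq_of_lt (Nat.mod_lt _ hn)
      simp only [hh5, h1]
    have hx2 : ∀ m, m < n → ((r + m) % n + (n - r)) % n = m := by
      intro m hm
      rw [Nat.mod_add_mod, show r + m + (n - r) = m + n by omega, Nat.add_mod_right,
        Nat.mod_eq_of_lt hm]
    have A2 : ∀ k, k + 2 ≤ n → h5 (r + k) ≤ h5 (r + k + 1) := by
      intro k hk
      simp only [hh5]
      rw [hx2 k (by omega), show r + k + 1 = r + (k + 1) by omega, hx2 (k + 1) (by omega)]
      exact kcls_mono (by omega) (by omega) (by omega) (by omega)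
    have key : ∀ m, m < n → h5 ((β + m) % n) = kcls c1 c2 c3 c4 m := by
      intro m hm
      have h1 : (β + m) % n % n = (β + m) % n := Nat.mod_eq_of_lt (Nat.mod_lt _ hn)
      have h3 : n * (1 + β / n) = n + Eb := by rw [hEb]; ring
      simp only [hh5, h1]
      rw [Nat.mod_add_mod, show β + m + (n - r) = m + n * (1 + β / n) by omega,
        Nat.add_mul_mod_self_left, Nat.mod_eq_of_lt hm]
    have mk5 : ∀ p, p < n → ∃ k, k < n ∧ h5 k = kcls c1 c2 c3 c4 p := by
      intro p hp
      exact ⟨(β + p) % n, Nat.mod_lt _ hn, key p hp⟩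
    have A3 : ∀ i : Fin 5, ∃ k, k < n ∧ h5 k = i := by
      intro i
      fin_cases i
      · obtain ⟨k, hk, hkk⟩ := mk5 0 (by omega)
        exact ⟨k, hk, by rw [hkk]; exact kcls_eq0 (by omega)⟩
      · obtain ⟨k, hk, hkk⟩ := mk5 c1 (by omega)
        exact ⟨k, hk, by rw [hkk]; exact kcls_eq1 (by omega) (by omega)⟩
      · obtain ⟨k, hk, hkk⟩ := mk5 c2 (by omega)
        exact ⟨k, hk, by rw [hkk]; exact kcls_eq2 (by omega) (by omega) (by omega)⟩
      · obtain ⟨k, hk, hkk⟩ := mk5 c3 (by omega)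
        exact ⟨k, hk, by rw [hkk]; exact kcls_eq3 (by omega) (by omega) (by omega) (by omega)⟩
      · obtain ⟨k, hk, hkk⟩ := mk5 c4 (by omega)
        exact ⟨k, hk, by rw [hkk]; exact kcls_eq4 (by omega) (by omega) (by omega) (by omega)⟩
    have A4 : ∀ i j : Fin 5, i ≠ j → ∃ p q : ℕ, ∃ (hp : p < l.length) (hq : q < l.length),
        h5 p = i ∧ h5 q = j ∧ F.Adj (l.get ⟨p, hp⟩) (l.get ⟨q, hq⟩) := by
      intro i j hij
      obtain ⟨p, q, hp, hq, hpi, hqj, hPpq⟩ := hpairs i j hij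
      refine ⟨(β + p) % n, (β + q) % n, by rw [← hnl]; exact Nat.mod_lt _ hn,
        by rw [← hnl]; exact Nat.mod_lt _ hn, ?_, ?_, ?_⟩
      · rw [key p hp]; exact hpi
      · rw [key q hq]; exact hqj
      · show F.Adj (e (β + p)) (e (β + q))
        exact hPpq
    have A1' : ∀ k, h5 k = h5 (k % l.length) := by rw [← hnl]; exact A1
    have A2' : ∀ k, k + 2 ≤ l.length → h5 (r + k) ≤ h5 (r + k + 1) := by
      rw [← hnl]; exact A2
    have A3' : ∀ i : Fin 5, ∃ k, k < l.length ∧ h5 k = i := by rw [← hnl]; exact A3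
    exact assemble F l hnodup h5 r A1' A2' A3' A4

  · -- reflected orientation
    have hgaeq : g = n - 1 - a0 := by rw [hgeq]; exact min_eq_right (by omega)
    have hsym' : ∀ k m, F.Adj (e (k0 + n - k % n)) (e (k0 + n - m % n)) →
        F.Adj (e (k0 + n - m % n)) (e (k0 + n - k % n)) := fun k m h => h.symm
    have hperL' : ∀ k m, F.Adj (e (k0 + n - (k + n) % n)) (e (k0 + n - m % n)) ↔
        F.Adj (e (k0 + n - k % n)) (e (k0 + n - m % n)) := by
      intro k m
      rw [Nat.add_mod_right]
    have hcyc' : ∀ k, F.Adj (e (k0 + n - k % n)) (e (k0 + n - (k + 1) % n)) := by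
      intro k
      have hXn : k % n < n := Nat.mod_lt _ hn
      rcases lt_or_ge (k % n + 1) n with hlt | hge
      · have hX1 : (k + 1) % n = k % n + 1 := by
          rw [← Nat.mod_add_mod]; exact Nat.mod_eq_of_lt hlt
        rw [hX1]
        have h := C.adj_of_mem_edges (he4 (k0 + n - (k % n + 1)))
        rw [show k0 + n - (k % n + 1) + 1 = k0 + n - k % n by omega] at h
        exact h.symm
      · have hXeq : k % n = n - 1 := by omega
        have hX1 : (k + 1) % n = 0 := by
          rw [← Nat.mod_add_mod, hXeq, show n - 1 + 1 = n by omega, Nat.mod_self]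
        rw [hX1, hXeq, show k0 + n - (n - 1) = k0 + 1 by omega,
          show k0 + n - 0 = k0 + n by omega, he1]
        exact (C.adj_of_mem_edges (he4 k0)).symm
    have hbase1' : F.Adj (e (k0 + n - (n - 1) % n)) (e (k0 + n - g % n)) := by
      rw [Nat.mod_eq_of_lt (show n - 1 < n by omega), Nat.mod_eq_of_lt hgn,
        show k0 + n - (n - 1) = k0 + 1 by omega, show k0 + n - g = k0 + 1 + a0 by omega]
      exact hQ2
    have hbase2' : F.Adj (e (k0 + n - 0 % n)) (e (k0 + n - g % n)) := by
      rw [Nat.zero_mod, Nat.mod_eq_of_lt hgn, show k0 + n - 0 = k0 + n by omega, he1,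
        show k0 + n - g = k0 + 1 + a0 by omega]
      exact hQ1
    have hmin'' : ∀ k a, 2 ≤ a → a + 3 ≤ n →
        F.Adj (e (k0 + n - k % n)) (e (k0 + n - (k + 1 + a) % n)) →
        F.Adj (e (k0 + n - (k + 1) % n)) (e (k0 + n - (k + 1 + a) % n)) →
        g ≤ a ∧ g + a + 1 ≤ n := by
      intro k a h1 h2 hp1 hp2
      have hXn : k % n < n := Nat.mod_lt _ hn
      have hX1n : (k + 1) % n < n := Nat.mod_lt _ hn
      have hX2n : (k + 1 + a) % n < n := Nat.mod_lt _ hn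
      have hr1 : (k % n + 1) % n = (k + 1) % n := Nat.mod_add_mod _ _ _
      have hr2 : ((k + 1) % n + a) % n = (k + 1 + a) % n := Nat.mod_add_mod _ _ _
      have hc1 : (k + 1) % n = k % n + 1 ∨ (k % n = n - 1 ∧ (k + 1) % n = 0) := by
        rcases modsplit' hn (x := k % n + 1) (by omega) with ⟨ha', hb'⟩ | ⟨ha', hb'⟩
        · left; omega
        · right; omega
      have hc2 : (k + 1) % n + a = (k + 1 + a) % n ∨
          (k + 1) % n + a = (k + 1 + a) % n + n := by
        rcases modsplit' hn (x := (k + 1) % n + a) (by omega) with ⟨ha', hb'⟩ | ⟨ha', hb'⟩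
        · left; omega
        · right; omega
      have hee : e (k0 + n - (k + 1) % n + 1 + (n - 1 - a)) = e (k0 + n - (k + 1 + a) % n) := by
        apply egeq
        rcases hc2 with h | h
        · exact modeq_dvd' (dvd_refl n) (Or.inl (by omega))
        · exact modeq_dvd' (dvd_zero n) (Or.inl (by omega))
      have hee2 : e (k0 + n - (k + 1) % n + 1) = e (k0 + n - k % n) := by
        apply egeq
        rcases hc1 with h | ⟨h1', h2'⟩
        · exact modeq_dvd' (dvd_zero n) (Or.inl (by omega))
        · exact modeq_dvd' (dvd_refl n) (Or.inl (by omega))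
      have hchord1 : F.Adj (e (k0 + n - (k + 1) % n))
          (e (k0 + n - (k + 1) % n + 1 + (n - 1 - a))) := by
        rw [hee]; exact hp2
      have hchord2 : F.Adj (e (k0 + n - (k + 1) % n + 1))
          (e (k0 + n - (k + 1) % n + 1 + (n - 1 - a))) := by
        rw [hee, hee2]; exact hp1
      have hres := hmin' (k0 + n - (k + 1) % n) (n - 1 - a) (by omega) (by omega)
        hchord1 hchord2
      omega
    have he1r : ∀ k, e (k0 + n - (k + n) % n) = e (k0 + n - k % n) := fun k => by
      rw [Nat.add_mod_right]
    have emodr : ∀ k, e (k0 + n - k % n) = e (k0 + n - k % n % n) := fun k => by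
      rw [Nat.mod_eq_of_lt (Nat.mod_lt _ hn)]
    have he3r : ∀ x : V, ∃ m, m < n ∧ e (k0 + n - m % n) = x := by
      intro x
      obtain ⟨m, hm, hem⟩ := he3 x
      obtain ⟨k, hk, hmod⟩ := reflpos' hn k0 m hm
      exact ⟨k, hk, (egeq _ _ hmod).trans hem⟩
    have he4r : ∀ k, s(e (k0 + n - k % n), e (k0 + n - (k + 1) % n)) ∈ C.edges := by
      intro k
      have hXn : k % n < n := Nat.mod_lt _ hn
      rcases lt_or_ge (k % n + 1) n with hlt | hge
      · have hX1 : (k + 1) % n = k % n + 1 := by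
          rw [← Nat.mod_add_mod]; exact Nat.mod_eq_of_lt hlt
        rw [hX1]
        have h := he4 (k0 + n - (k % n + 1))
        rw [show k0 + n - (k % n + 1) + 1 = k0 + n - k % n by omega] at h
        rw [Sym2.eq_swap]
        exact h
      · have hXeq : k % n = n - 1 := by omega
        have hX1 : (k + 1) % n = 0 := by
          rw [← Nat.mod_add_mod, hXeq, show n - 1 + 1 = n by omega, Nat.mod_self]
        rw [hX1, hXeq, show k0 + n - (n - 1) = k0 + 1 by omega,
          show k0 + n - 0 = k0 + n by omega, he1, Sym2.eq_swap]
        exact he4 k0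
    have hdich' := dich F C htri n hn (fun k => e (k0 + n - k % n)) he1r emodr he3r he4r 0
    simp only [Nat.zero_add] at hdich'
    obtain ⟨c1, c2, c3, c4, hcc1, hcc12, hcc23, hcc34, hcc4n, hpairs⟩ :=
      core0 n (fun x y => F.Adj (e (k0 + n - x % n)) (e (k0 + n - y % n))) hsym' hperL'
        hcyc' g hg2 hg2n hbase1' hbase2' hmin'' hdich'
    set r := (k0 + 1) % n with hr
    have hrn : r < n := Nat.mod_lt _ hn
    set h5 : ℕ → Fin 5 := fun k => sigma5 (kcls c1 c2 c3 c4 ((k0 + n - k % n) % n)) with hh5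
    have A1 : ∀ k, h5 k = h5 (k % n) := by
      intro k
      have h1 : k % n % n = k % n := Nat.mod_eq_of_lt (Nat.mod_lt _ hn)
      simp only [hh5, h1]
    have hx2 : ∀ m, m + 1 ≤ n → (k0 + n - (r + m) % n) % n = n - 1 - m := by
      intro m hm
      have h1 : (r + m) % n = (k0 + 1 + m) % n := by rw [hr, Nat.mod_add_mod]
      have hY : (k0 + 1 + m) % n + n * ((k0 + 1 + m) / n) = k0 + 1 + m :=
        Nat.mod_add_div _ _
      have hYn : (k0 + 1 + m) % n < n := Nat.mod_lt _ hn
      rw [h1]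
      have h2 : (k0 + n - (k0 + 1 + m) % n) % n = (n - 1 - m) % n :=
        modeq_dvd' (M := n * ((k0 + 1 + m) / n)) (Dvd.intro _ rfl) (Or.inl (by omega))
      rw [h2, Nat.mod_eq_of_lt (by omega)]
    have A2 : ∀ k, k + 2 ≤ n → h5 (r + k) ≤ h5 (r + k + 1) := by
      intro k hk
      simp only [hh5]
      rw [hx2 k (by omega), show r + k + 1 = r + (k + 1) by omega, hx2 (k + 1) (by omega)]
      have hmono : kcls c1 c2 c3 c4 (n - 1 - (k + 1)) ≤ kcls c1 c2 c3 c4 (n - 1 - k) :=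
        kcls_mono (by omega) (by omega) (by omega) (by omega)
      exact sigma5_anti _ _ hmono
    have key : ∀ m, m < n → h5 ((k0 + n - m) % n) = sigma5 (kcls c1 c2 c3 c4 m) := by
      intro m hm
      have hk' : (k0 + n - m) % n < n := Nat.mod_lt _ hn
      have h1 : (k0 + n - m) % n % n = (k0 + n - m) % n := Nat.mod_eq_of_lt hk'
      have hY : (k0 + n - m) % n + n * ((k0 + n - m) / n) = k0 + n - m := Nat.mod_add_div _ _
      simp only [hh5, h1]
      have h2 : (k0 + n - (k0 + n - m) % n) % n = m % n :=
        modeq_dvd' (M := n * ((k0 + n - m) / n)) (Dvd.intro _ rfl) (Or.inl (by omega))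
      rw [h2, Nat.mod_eq_of_lt hm]
    have mk5 : ∀ p, p < n → ∃ k, k < n ∧ h5 k = sigma5 (kcls c1 c2 c3 c4 p) := by
      intro p hp
      exact ⟨(k0 + n - p) % n, Nat.mod_lt _ hn, key p hp⟩
    have A3 : ∀ i : Fin 5, ∃ k, k < n ∧ h5 k = i := by
      intro i
      fin_cases i
      · obtain ⟨k, hk, hkk⟩ := mk5 c4 (by omega)
        exact ⟨k, hk, by
          rw [hkk, kcls_eq4 (by omega) (by omega) (by omega) (by omega)]; decide⟩
      · obtain ⟨k, hk, hkk⟩ := mk5 c3 (by omega)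
        exact ⟨k, hk, by
          rw [hkk, kcls_eq3 (by omega) (by omega) (by omega) (by omega)]; decide⟩
      · obtain ⟨k, hk, hkk⟩ := mk5 c2 (by omega)
        exact ⟨k, hk, by
          rw [hkk, kcls_eq2 (by omega) (by omega) (by omega)]; decide⟩
      · obtain ⟨k, hk, hkk⟩ := mk5 c1 (by omega)
        exact ⟨k, hk, by rw [hkk, kcls_eq1 (by omega) (by omega)]; decide⟩
      · obtain ⟨k, hk, hkk⟩ := mk5 0 (by omega)
        exact ⟨k, hk, by rw [hkk, kcls_eq0 (by omega)]; decide⟩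
    have A4 : ∀ i j : Fin 5, i ≠ j → ∃ p q : ℕ, ∃ (hp : p < l.length) (hq : q < l.length),
        h5 p = i ∧ h5 q = j ∧ F.Adj (l.get ⟨p, hp⟩) (l.get ⟨q, hq⟩) := by
      intro i j hij
      obtain ⟨p, q, hp, hq, hpi, hqj, hPpq⟩ := hpairs (sigma5 i) (sigma5 j) (sigma5_ne i j hij)
      rw [Nat.mod_eq_of_lt hp, Nat.mod_eq_of_lt hq] at hPpq
      refine ⟨(k0 + n - p) % n, (k0 + n - q) % n, by rw [← hnl]; exact Nat.mod_lt _ hn,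
        by rw [← hnl]; exact Nat.mod_lt _ hn, ?_, ?_, ?_⟩
      · rw [key p hp, hpi, sigma5_sigma5]
      · rw [key q hq, hqj, sigma5_sigma5]
      · show F.Adj (e (k0 + n - p)) (e (k0 + n - q))
        exact hPpq
    have A1' : ∀ k, h5 k = h5 (k % l.length) := by rw [← hnl]; exact A1
    have A2' : ∀ k, k + 2 ≤ l.length → h5 (r + k) ≤ h5 (r + k + 1) := by
      rw [← hnl]; exact A2
    have A3' : ∀ i : Fin 5, ∃ k, k < l.length ∧ h5 k = i := by rw [← hnl]; exact A3
    exact assemble F l hnodup h5 r A1' A2' A3' A4
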